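/- Let (G,κ) be a proper edge coloring of a finite simple graph. The coloring group 𝔊_κ is imprimitive if and only if there exists an imprimitive vertex coloring of G with respect to κ, i.e. a map ν : V(G) → {1,…,ℓ} such that: (i) whenever an edge colored b joins a vertex with ν-color a to a vertex with ν-color c with a ≠ c, every vertex with ν-color a is joined by an edge colored b to some vertex with ν-color c; and (ii) some ν-color class has size strictly greater than 1 and strictly less than |V(G)|. -/

import Mathlib

open scoped Classical

/-- A proper edge coloring of a finite simple graph `G` with colors `{1, …, k}`:
it assigns colors in `{1, …, k}` to edges, is surjective onto `{1, …, k}`, and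
incident edges receive distinct colors. -/
def IsProperEdgeColoring {V : Type*} (G : SimpleGraph V) (k : ℕ) (κ : Sym2 V → ℕ) : Prop :=
  (∀ e ∈ G.edgeSet, κ e ∈ Finset.Icc 1 k) ∧
  (∀ a ∈ Finset.Icc 1 k, ∃ e ∈ G.edgeSet, κ e = a) ∧
  (∀ u v w : V, G.Adj u v → G.Adj u w → v ≠ w → κ s(u, v) ≠ κ s(u, w))
/-- `IsToggle G κ a τ` says that the permutation `τ` is the product of the
transpositions `(i j)` over all edges `{i,j}` of `G` colored `a`: it swaps the two
endpoints of every edge colored `a` and fixes all other vertices. -/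
def IsToggle {V : Type*} (G : SimpleGraph V) (κ : Sym2 V → ℕ) (a : ℕ) (τ : Equiv.Perm V) : Prop :=
  ∀ v w : V, v ≠ w → (τ v = w ↔ G.Adj v w ∧ κ s(v, w) = a)
/-- The coloring group `𝔊_κ`: the subgroup of `Sym(V)` generated by the
permutations `τ_1, …, τ_k` associated to the colors `1, …, k`. -/
def coloringGroup {V : Type*} (G : SimpleGraph V) (k : ℕ) (κ : Sym2 V → ℕ) :
    Subgroup (Equiv.Perm V) :=
  Subgroup.closure { τ : Equiv.Perm V | ∃ a : ℕ, 1 ≤ a ∧ a ≤ k ∧ IsToggle G κ a τ }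
/-- A subgroup `H ≤ Sym(X)` is imprimitive if there is an `H`-invariant partition of `X`
(encoded as an `H`-invariant equivalence relation) having a block of size strictly
between `1` and `|X|`. -/
def Imprimitive {X : Type*} [Fintype X] (H : Subgroup (Equiv.Perm X)) : Prop :=
  ∃ r : X → X → Prop, Equivalence r ∧
    (∀ g ∈ H, ∀ x y : X, r x y → r (g x) (g y)) ∧
    ∃ x : X, 1 < {y | r x y}.ncard ∧ {y | r x y}.ncard < Fintype.card X

section Aux

variable {V : Type*}

lemma toggle_invol {G : SimpleGraph V} {κ : Sym2 V → ℕ} {a : ℕ}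
    {τ : Equiv.Perm V} (h : IsToggle G κ a τ) : ∀ v, τ (τ v) = v := by
  intro v
  rcases eq_or_ne (τ v) v with hv | hv
  · rw [hv, hv]
  · have hvw := (h v (τ v) (Ne.symm hv)).mp rfl
    refine (h (τ v) v hv).mpr ⟨hvw.1.symm, ?_⟩
    rw [Sym2.eq_swap]; exact hvw.2

lemma toggle_exists (G : SimpleGraph V) (k : ℕ) (κ : Sym2 V → ℕ)
    (hκ : IsProperEdgeColoring G k κ) (b : ℕ) :
    ∃ τ : Equiv.Perm V, IsToggle G κ b τ := by
  classical
  have funiq : ∀ v w w' : V, G.Adj v w → κ s(v,w) = b → G.Adj v w' → κ s(v,w') = b → w = w' := by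
    intro v w w' h1 h2 h3 h4
    by_contra hne
    exact hκ.2.2 v w w' h1 h3 hne (h2.trans h4.symm)
  set f : V → V := fun v => if h : ∃ w, G.Adj v w ∧ κ s(v,w) = b then h.choose else v with hf
  have hfspec : ∀ v, (∃ w, G.Adj v w ∧ κ s(v,w) = b) → G.Adj v (f v) ∧ κ s(v, f v) = b := by
    intro v h
    have : f v = h.choose := by simp only [hf, dif_pos h]
    rw [this]; exact h.choose_spec
  have hinv : Function.Involutive f := by
    intro v
    by_cases h : ∃ w, G.Adj v w ∧ κ s(v,w) = b
    · obtain ⟨ha, hb⟩ := hfspec v h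
      have h2 : ∃ w, G.Adj (f v) w ∧ κ s(f v, w) = b := ⟨v, ha.symm, by rwa [Sym2.eq_swap]⟩
      obtain ⟨hc, hd⟩ := hfspec (f v) h2
      exact funiq (f v) (f (f v)) v hc hd ha.symm (by rwa [Sym2.eq_swap])
    · have h1 : f v = v := by simp only [hf, dif_neg h]
      rw [h1, h1]
  refine ⟨Function.Involutive.toPerm f hinv, ?_⟩
  intro v w hvw
  have hcoe : Function.Involutive.toPerm f hinv v = f v := rfl
  rw [hcoe]
  constructor
  · intro hfv
    by_cases h : ∃ w, G.Adj v w ∧ κ s(v,w) = b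
    · obtain ⟨ha, hb⟩ := hfspec v h
      rw [hfv] at ha hb; exact ⟨ha, hb⟩
    · exfalso; apply hvw
      rw [← hfv]; simp only [hf, dif_neg h]
  · rintro ⟨ha, hb⟩
    obtain ⟨hc, hd⟩ := hfspec v ⟨w, ha, hb⟩
    exact funiq v (f v) w hc hd ha hb

lemma toggle_pres {G : SimpleGraph V} {κ : Sym2 V → ℕ} {b : ℕ} {ν : V → ℕ}
    {τ : Equiv.Perm V} (hτ : IsToggle G κ b τ)
    (hν2 : ∀ u v : V, ∀ b : ℕ, G.Adj u v → κ s(u, v) = b → ν u ≠ ν v →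
      ∀ w : V, ν w = ν u → ∃ x : V, G.Adj w x ∧ κ s(w, x) = b ∧ ν x = ν v) :
    ∀ x y : V, ν x = ν y → ν (τ x) = ν (τ y) := by
  intro x y hxy
  by_cases hx : ν (τ x) = ν x
  · by_cases hy : ν (τ y) = ν y
    · rw [hx, hy, hxy]
    · exfalso
      have hne : τ y ≠ y := fun h => hy (by rw [h])
      have hadj := (hτ y (τ y) (Ne.symm hne)).mp rfl
      obtain ⟨x', hx'adj, hx'col, hx'ν⟩ :=
        hν2 y (τ y) b hadj.1 hadj.2 (fun h => hy h.symm) x hxy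
      have hτx : τ x = x' := (hτ x x' hx'adj.ne).mpr ⟨hx'adj, hx'col⟩
      apply hy
      rw [← hx'ν, ← hτx, hx, hxy]
  · have hne : τ x ≠ x := fun h => hx (by rw [h])
    have hadj := (hτ x (τ x) (Ne.symm hne)).mp rfl
    obtain ⟨y', hy'adj, hy'col, hy'ν⟩ :=
      hν2 x (τ x) b hadj.1 hadj.2 (fun h => hx h.symm) y hxy.symm
    have hτy : τ y = y' := (hτ y y' hy'adj.ne).mpr ⟨hy'adj, hy'col⟩
    rw [hτy]; exact hy'ν.symm

end Aux

/-- `𝔊_κ` is imprimitive iff `G` admits an imprimitive vertex coloring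
with respect to `κ`: (i) whenever an edge colored `b` joins a vertex colored `a` to a
vertex colored `c ≠ a`, every vertex colored `a` is joined by an edge colored `b` to some
vertex colored `c`; (ii) some vertex-color class has size strictly between `1` and `|V|`. -/
theorem stmt_4 {V : Type*} [Fintype V] (G : SimpleGraph V) (k : ℕ) (κ : Sym2 V → ℕ)
    (hκ : IsProperEdgeColoring G k κ) :
    Imprimitive (coloringGroup G k κ) ↔
      ∃ (ℓ : ℕ) (ν : V → ℕ),
        (∀ v : V, ν v ∈ Finset.Icc 1 ℓ) ∧
        (∀ u v : V, ∀ b : ℕ, G.Adj u v → κ s(u, v) = b → ν u ≠ ν v →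
          ∀ w : V, ν w = ν u → ∃ x : V, G.Adj w x ∧ κ s(w, x) = b ∧ ν x = ν v) ∧
        (∃ a : ℕ, 1 < {v : V | ν v = a}.ncard ∧ {v : V | ν v = a}.ncard < Fintype.card V) := by
  constructor
  · rintro ⟨r, hr, hinvar, x₀, h1, h2⟩
    classical
    let s : Setoid V := ⟨r, hr⟩
    haveI : Fintype (Quotient s) := Fintype.ofFinite _
    let e := Fintype.equivFin (Quotient s)
    set ν : V → ℕ := fun v => (e (Quotient.mk s v) : ℕ) + 1 with hνdef
    have hνr : ∀ u v : V, ν u = ν v ↔ r u v := by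
      intro u v
      constructor
      · intro h
        have h' : (e (Quotient.mk s u) : ℕ) = (e (Quotient.mk s v) : ℕ) := by
          simpa [hνdef] using h
        have : Quotient.mk s u = Quotient.mk s v := e.injective (Fin.ext h')
        exact Quotient.exact this
      · intro h
        have : Quotient.mk s u = Quotient.mk s v := Quotient.sound h
        simp [hνdef, this]
    refine ⟨Fintype.card (Quotient s), ν, ?_, ?_, ?_⟩
    · intro v
      simp only [Finset.mem_Icc, hνdef]
      exact ⟨Nat.le_add_left 1 _, Nat.succ_le_of_lt (e (Quotient.mk s v)).is_lt⟩
    · intro u v b hadj hcol hneq w hw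
      have hb : b ∈ Finset.Icc 1 k := by
        rw [← hcol]; exact hκ.1 _ ((G.mem_edgeSet).mpr hadj)
      rw [Finset.mem_Icc] at hb
      obtain ⟨τ, hτ⟩ := toggle_exists G k κ hκ b
      have hτmem : τ ∈ coloringGroup G k κ :=
        Subgroup.subset_closure ⟨b, hb.1, hb.2, hτ⟩
      have hτu : τ u = v := (hτ u v hadj.ne).mpr ⟨hadj, hcol⟩
      have hrwu : r w u := (hνr w u).mp hw
      have hrτ : r (τ w) v := by
        have := hinvar τ hτmem w u hrwu
        rwa [hτu] at this
      have hne : τ w ≠ w := by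
        intro h
        rw [h] at hrτ
        exact hneq ((hνr u v).mpr (hr.trans (hr.symm hrwu) hrτ))
      have hadj' := (hτ w (τ w) (Ne.symm hne)).mp rfl
      exact ⟨τ w, hadj'.1, hadj'.2, (hνr (τ w) v).mpr hrτ⟩
    · refine ⟨ν x₀, ?_, ?_⟩
      · have hset : {v : V | ν v = ν x₀} = {y : V | r x₀ y} := by
          ext v
          simp only [Set.mem_setOf_eq]
          rw [hνr v x₀]
          exact ⟨hr.symm, hr.symm⟩
        rw [hset]; exact h1
      · have hset : {v : V | ν v = ν x₀} = {y : V | r x₀ y} := by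
          ext v
          simp only [Set.mem_setOf_eq]
          rw [hνr v x₀]
          exact ⟨hr.symm, hr.symm⟩
        rw [hset]; exact h2
  · rintro ⟨ℓ, ν, hν1, hν2, a, ha1, ha2⟩
    refine ⟨fun u v => ν u = ν v, ⟨fun _ => rfl, Eq.symm, Eq.trans⟩, ?_, ?_⟩
    · have hle : coloringGroup G k κ ≤
          { carrier := {g : Equiv.Perm V | ∀ x y : V, ν x = ν y ↔ ν (g x) = ν (g y)}
            one_mem' := fun _ _ => Iff.rfl
            mul_mem' := fun ha hb x y => (hb x y).trans (ha _ _)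
            inv_mem' := fun {g} hg x y => by
              have := hg (g⁻¹ x) (g⁻¹ y)
              simp only [Equiv.Perm.inv_def, Equiv.apply_symm_apply] at this
              exact this.symm } := by
        rw [coloringGroup, Subgroup.closure_le]
        rintro τ ⟨b, _, _, hτ⟩
        intro x y
        constructor
        · exact toggle_pres hτ hν2 x y
        · intro h
          have := toggle_pres hτ hν2 (τ x) (τ y) h
          rwa [toggle_invol hτ, toggle_invol hτ] at this
      exact fun g hg x y h => (hle hg x y).mp h
    · have hne : {v : V | ν v = a}.Nonempty := by
        rw [Set.nonempty_iff_ne_empty]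
        intro h
        rw [h] at ha1
        simp at ha1
      obtain ⟨x, hx⟩ := hne
      have hset : {y : V | ν x = ν y} = {v : V | ν v = a} := by
        ext y
        simp only [Set.mem_setOf_eq]
        rw [hx]
        exact ⟨Eq.symm, Eq.symm⟩
      exact ⟨x, by rw [hset]; exact ha1, by rw [hset]; exact ha2⟩
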